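/- The anisotropic ℓ₁-norm h(x) = ‖x‖₁ = Σᵢ |xᵢ| on ℝⁿ satisfies: for every x̄ ∈ ℝⁿ and every σ > 0, there exists ε > 0 such that for all x with ‖x − x̄‖ < ε, there is a subgradient w̄ ∈ ∂‖·‖₁(x̄) (with w̄ᵢ = sign(x̄ᵢ) if x̄ᵢ ≠ 0 and w̄ᵢ = sign(xᵢ) if x̄ᵢ = 0) satisfying ‖x‖₁ ≤ ‖x̄‖₁ + ⟨x − x̄, w̄⟩ + (σ/2)‖x − x̄‖². -/

import Mathlib

lemma coord_le_norm {n : ℕ} (y : EuclideanSpace ℝ (Fin n)) (i : Fin n) :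
    |y i| ≤ ‖y‖ := by
  rw [EuclideanSpace.norm_eq]
  have h1 : |y i| = Real.sqrt (‖y i‖ ^ 2) := by
    rw [Real.sqrt_sq_eq_abs]; simp [abs_abs]
  rw [h1]
  apply Real.sqrt_le_sqrt
  exact Finset.single_le_sum (f := fun j => ‖y j‖ ^ 2)
    (fun j _ => by positivity) (Finset.mem_univ i)

lemma abs_eq_self_mul_sign (r : ℝ) : |r| = r * Real.sign r := by
  rcases lt_trichotomy r 0 with h | h | h
  · rw [Real.sign_of_neg h, abs_of_neg h]; ring
  · simp [h]
  · rw [Real.sign_of_pos h, abs_of_pos h]; ring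

lemma exists_eps {n : ℕ} (xbar : EuclideanSpace ℝ (Fin n)) :
    ∃ ε > 0, ∀ i, xbar i ≠ 0 → ε ≤ |xbar i| := by
  have H : ∀ s : Finset (Fin n), ∃ ε > 0, ∀ i ∈ s, xbar i ≠ 0 → ε ≤ |xbar i| := by
    intro s
    induction s using Finset.induction with
    | empty => exact ⟨1, one_pos, by simp⟩
    | @insert a s hni ih =>
      obtain ⟨ε, hε, hle⟩ := ih
      by_cases ha : xbar a = 0
      · exact ⟨ε, hε, by
          intro i hi hne
          rcases Finset.mem_insert.mp hi with rfl | hi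
          · exact absurd ha hne
          · exact hle i hi hne⟩
      · refine ⟨min ε |xbar a|, lt_min hε (abs_pos.mpr ha), ?_⟩
        intro i hi hne
        rcases Finset.mem_insert.mp hi with rfl | hi
        · exact min_le_right _ _
        · exact le_trans (min_le_left _ _) (hle i hi hne)
  obtain ⟨ε, hε, h⟩ := H Finset.univ
  exact ⟨ε, hε, fun i => h i (Finset.mem_univ i)⟩

/-- The anisotropic ℓ₁-norm on ℝⁿ satisfies the local upper quadratic
subgradient bound (Assumption 1). -/
theorem stmt_7 {n : ℕ} :
    ∀ (xbar : EuclideanSpace ℝ (Fin n)) (σ : ℝ), 0 < σ →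
      ∃ ε > 0, ∀ x : EuclideanSpace ℝ (Fin n), ‖x - xbar‖ < ε →
        ∃ w : EuclideanSpace ℝ (Fin n),
          (∀ i, |w i| ≤ 1) ∧
          (∑ i, w i * xbar i = ∑ i, |xbar i|) ∧
          (∀ i, xbar i ≠ 0 → w i = Real.sign (xbar i)) ∧
          (∀ i, xbar i = 0 → w i = Real.sign (x i)) ∧
          (∑ i, |x i|) ≤ (∑ i, |xbar i|) + (∑ i, (x i - xbar i) * w i)
            + (σ / 2) * ‖x - xbar‖ ^ 2 := by
  intro xbar σ hσ
  obtain ⟨ε, hε, hεle⟩ := exists_eps xbar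
  refine ⟨ε, hε, ?_⟩
  intro x hx
  set w : EuclideanSpace ℝ (Fin n) :=
    WithLp.toLp 2 (fun i => if xbar i = 0 then Real.sign (x i) else Real.sign (xbar i)) with hw
  have hwabs : ∀ i, |w i| ≤ 1 := by
    intro i
    simp only [hw]
    split <;>
    · rcases Real.sign_apply_eq _ with h | h | h <;> rw [h] <;> norm_num
  have hcoord : ∀ i, |(x - xbar) i| ≤ ‖x - xbar‖ := fun i => coord_le_norm _ i
  have hsub : ∀ i, (x - xbar) i = x i - xbar i := fun i => rfl
  -- sign agreement on nonzero coordinates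
  have key : ∀ i, |x i| = |xbar i| + (x i - xbar i) * w i := by
    intro i
    by_cases h0 : xbar i = 0
    · simp only [hw, if_pos h0, h0, abs_zero, sub_zero, zero_add]
      exact abs_eq_self_mul_sign (x i)
    · have hlt : |x i - xbar i| < |xbar i| := by
        calc |x i - xbar i| = |(x - xbar) i| := by rw [hsub]
        _ ≤ ‖x - xbar‖ := hcoord i
        _ < ε := hx
        _ ≤ |xbar i| := hεle i h0
      simp only [hw, if_neg h0]
      rcases lt_trichotomy (xbar i) 0 with h | h | h
      · have hxi : x i < 0 := by
          have := abs_lt.mp hlt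
          have := this.2
          rw [abs_of_neg h] at this
          linarith
        rw [Real.sign_of_neg h, abs_of_neg h, abs_of_neg hxi]; ring
      · exact absurd h h0
      · have hxi : 0 < x i := by
          have := abs_lt.mp hlt
          have := this.1
          rw [abs_of_pos h] at this
          linarith
        rw [Real.sign_of_pos h, abs_of_pos h, abs_of_pos hxi]; ring
  refine ⟨w, hwabs, ?_, ?_, ?_, ?_⟩
  · apply Finset.sum_congr rfl
    intro i _
    by_cases h0 : xbar i = 0
    · simp [h0]
    · rw [hw]
      simp only [if_neg h0]
      rw [abs_eq_self_mul_sign (xbar i)]; ring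
  · intro i h0; simp [hw, if_neg h0]
  · intro i h0; simp [hw, if_pos h0]
  · have hsum : (∑ i, |x i|) = (∑ i, |xbar i|) + (∑ i, (x i - xbar i) * w i) := by
      rw [← Finset.sum_add_distrib]
      exact Finset.sum_congr rfl fun i _ => key i
    rw [hsum]
    have : 0 ≤ (σ / 2) * ‖x - xbar‖ ^ 2 := by positivity
    linarith
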